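/- Let Â and B̂ be symmetric real N×N matrices, Ê and F̂ real N×N matrices, σ, σ̂ ∈ ℝ, and y, s ∈ ℝ^N with y ≠ 0. Assume Â y = σ B̂ y, (Â + Ê)(y + s) = σ̂ (B̂ + F̂)(y + s), yᵀ B̂ s = 0, yᵀ B̂ y ≠ 0, and yᵀ (B̂ + F̂)(y + s) ≠ 0. Set δ₁ = ‖s‖/‖y‖. Then χ(σ̂, σ) ≤ ( ‖y‖² (1 + δ₁) / √((yᵀ Â y)² + (yᵀ B̂ y)²) ) · √(‖Ê‖² + ‖F̂‖²). -/

import Mathlib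

open Matrix

/-- The spectral (ℓ²-operator) norm of a real matrix. -/
noncomputable def specNorm {ι κ : Type*} [Fintype ι] [Fintype κ] [DecidableEq κ]
    (A : Matrix ι κ ℝ) : ℝ :=
  ‖LinearMap.toContinuousLinearMap (Matrix.toEuclideanLin A)‖

/-- The chordal distance between two real numbers. -/
noncomputable def chordal (a b : ℝ) : ℝ :=
  |a - b| / (Real.sqrt (1 + a ^ 2) * Real.sqrt (1 + b ^ 2))

set_option maxHeartbeats 1000000

lemma specNorm_bound {N : ℕ} (Ehat : Matrix (Fin N) (Fin N) ℝ)
    (v : EuclideanSpace ℝ (Fin N)) :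
    ‖Matrix.toEuclideanLin Ehat v‖ ≤ specNorm Ehat * ‖v‖ := by
  have h := (LinearMap.toContinuousLinearMap (Matrix.toEuclideanLin Ehat)).le_opNorm v
  rwa [show (LinearMap.toContinuousLinearMap (Matrix.toEuclideanLin Ehat)) v
      = Matrix.toEuclideanLin Ehat v from congrFun (LinearMap.coe_toContinuousLinearMap' _) v] at h

/-- perturbation bound for the eigenvalue of a symmetric pair
in the chordal metric. -/
theorem stmt_3 {N : ℕ}
    (Ahat Bhat Ehat Fhat : Matrix (Fin N) (Fin N) ℝ)
    (hAsym : Ahat.IsSymm) (hBsym : Bhat.IsSymm)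
    (σ σh : ℝ)
    (y s : EuclideanSpace ℝ (Fin N)) (hy : y ≠ 0)
    (h1 : Matrix.toEuclideanLin Ahat y = σ • Matrix.toEuclideanLin Bhat y)
    (h2 : Matrix.toEuclideanLin (Ahat + Ehat) (y + s)
        = σh • Matrix.toEuclideanLin (Bhat + Fhat) (y + s))
    (h3 : (inner ℝ y (Matrix.toEuclideanLin Bhat s) : ℝ) = 0)
    (h4 : (inner ℝ y (Matrix.toEuclideanLin Bhat y) : ℝ) ≠ 0)
    (h5 : (inner ℝ y (Matrix.toEuclideanLin (Bhat + Fhat) (y + s)) : ℝ) ≠ 0) :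
    chordal σh σ ≤
      ‖y‖ ^ 2 * (1 + ‖s‖ / ‖y‖) /
        Real.sqrt ((inner ℝ y (Matrix.toEuclideanLin Ahat y) : ℝ) ^ 2
          + (inner ℝ y (Matrix.toEuclideanLin Bhat y) : ℝ) ^ 2) *
      Real.sqrt (specNorm Ehat ^ 2 + specNorm Fhat ^ 2) := by
  have hyn : (0:ℝ) < ‖y‖ := norm_pos_iff.mpr hy
  set A := Matrix.toEuclideanLin Ahat with hAdef
  set B := Matrix.toEuclideanLin Bhat with hBdef
  set E := Matrix.toEuclideanLin Ehat with hEdef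
  set F := Matrix.toEuclideanLin Fhat with hFdef
  have hAE : Matrix.toEuclideanLin (Ahat + Ehat) = A + E := map_add _ _ _
  have hBF : Matrix.toEuclideanLin (Bhat + Fhat) = B + F := map_add _ _ _
  rw [hAE] at h2
  rw [hBF] at h2 h5
  have hAherm : Ahat.IsHermitian := by simpa [Matrix.IsHermitian, Matrix.IsSymm] using hAsym
  have hBherm : Bhat.IsHermitian := by simpa [Matrix.IsHermitian, Matrix.IsSymm] using hBsym
  have hAsymm : A.IsSymmetric := Matrix.isHermitian_iff_isSymmetric.mp hAherm
  have hBsymm : B.IsSymmetric := Matrix.isHermitian_iff_isSymmetric.mp hBherm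
  clear_value A B E F
  set α : ℝ := inner ℝ y (A y) with hαdef
  set β : ℝ := inner ℝ y (B y) with hβdef
  set e : ℝ := inner ℝ y (E (y + s)) with hedef
  set f : ℝ := inner ℝ y (F (y + s)) with hfdef
  clear_value α β e f
  -- α = σ β
  have hαβ : α = σ * β := by
    have h' := congrArg (fun v : EuclideanSpace ℝ (Fin N) => (inner ℝ y v : ℝ)) h1
    simp only [real_inner_smul_right] at h'
    rw [← hαdef, ← hβdef] at h'
    exact h'
  -- ⟪y, A s⟫ = 0
  have hAs : (inner ℝ y (A s) : ℝ) = 0 := by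
    have h' : (inner ℝ y (A s) : ℝ) = inner ℝ (A y) s := (hAsymm y s).symm
    rw [h1, real_inner_smul_left, hBsymm y s, h3, mul_zero] at h'
    exact h'
  -- ⟪y, (A+E)(y+s)⟫ = α + e,  ⟪y, (B+F)(y+s)⟫ = β + f
  have hexp : ∀ (T : EuclideanSpace ℝ (Fin N) →ₗ[ℝ] EuclideanSpace ℝ (Fin N))
      (G : EuclideanSpace ℝ (Fin N) →ₗ[ℝ] EuclideanSpace ℝ (Fin N)),
      (inner ℝ y ((T + G) (y + s)) : ℝ)
        = inner ℝ y (T y) + (inner ℝ y (T s) : ℝ) + inner ℝ y (G (y + s)) := by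
    intro T G
    rw [LinearMap.add_apply, inner_add_right, map_add, inner_add_right]
  have hαh : (inner ℝ y ((A + E) (y + s)) : ℝ) = α + e := by
    rw [hexp A E, hAs, ← hαdef, ← hedef]; ring
  have hβh : (inner ℝ y ((B + F) (y + s)) : ℝ) = β + f := by
    rw [hexp B F, h3, ← hβdef, ← hfdef]; ring
  have hβf : β + f ≠ 0 := by rwa [hβh] at h5
  -- α + e = σh (β + f)
  have hmain : α + e = σh * (β + f) := by
    have := congrArg (fun v : EuclideanSpace ℝ (Fin N) => (inner ℝ y v : ℝ)) h2
    simp only [real_inner_smul_right] at this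
    rw [hαh, hβh] at this
    exact this
  -- the key determinant identity
  have h6 : β * (β + f) * (σh - σ) = e * (β + f) - f * (α + e) := by
    linear_combination (β + f) * hαβ - β * hmain
  -- Cauchy-Schwarz in ℝ²
  have hCS : |e * (β + f) - f * (α + e)|
      ≤ Real.sqrt (e ^ 2 + f ^ 2) * Real.sqrt ((α + e) ^ 2 + (β + f) ^ 2) := by
    have hsq : (e * (β + f) - f * (α + e)) ^ 2
        ≤ (e ^ 2 + f ^ 2) * ((α + e) ^ 2 + (β + f) ^ 2) := by
      nlinarith [sq_nonneg (e * (α + e) + f * (β + f))]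
    calc |e * (β + f) - f * (α + e)|
        = Real.sqrt ((e * (β + f) - f * (α + e)) ^ 2) := (Real.sqrt_sq_eq_abs _).symm
      _ ≤ Real.sqrt ((e ^ 2 + f ^ 2) * ((α + e) ^ 2 + (β + f) ^ 2)) := Real.sqrt_le_sqrt hsq
      _ = Real.sqrt (e ^ 2 + f ^ 2) * Real.sqrt ((α + e) ^ 2 + (β + f) ^ 2) :=
          Real.sqrt_mul (by positivity) _
  have hDh : Real.sqrt ((α + e) ^ 2 + (β + f) ^ 2) = |β + f| * Real.sqrt (1 + σh ^ 2) := by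
    have h' : (α + e) ^ 2 + (β + f) ^ 2 = (β + f) ^ 2 * (1 + σh ^ 2) := by
      rw [hmain]; ring
    rw [h', Real.sqrt_mul (sq_nonneg _), Real.sqrt_sq_eq_abs]
  have hD : Real.sqrt (α ^ 2 + β ^ 2) = |β| * Real.sqrt (1 + σ ^ 2) := by
    have h' : α ^ 2 + β ^ 2 = β ^ 2 * (1 + σ ^ 2) := by rw [hαβ]; ring
    rw [h', Real.sqrt_mul (sq_nonneg _), Real.sqrt_sq_eq_abs]
  have hs1 : (0:ℝ) < Real.sqrt (1 + σh ^ 2) := Real.sqrt_pos.mpr (by positivity)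
  have hs2 : (0:ℝ) < Real.sqrt (1 + σ ^ 2) := Real.sqrt_pos.mpr (by positivity)
  have hβpos : (0:ℝ) < |β| := abs_pos.mpr h4
  have hβfpos : (0:ℝ) < |β + f| := abs_pos.mpr hβf
  -- |β| |σh - σ| ≤ √(e²+f²) √(1+σh²)
  have hkey : |β| * |σh - σ| ≤ Real.sqrt (e ^ 2 + f ^ 2) * Real.sqrt (1 + σh ^ 2) := by
    have h7 : |β| * |β + f| * |σh - σ|
        ≤ Real.sqrt (e ^ 2 + f ^ 2) * (|β + f| * Real.sqrt (1 + σh ^ 2)) := by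
      calc |β| * |β + f| * |σh - σ| = |β * (β + f) * (σh - σ)| := by
            rw [abs_mul, abs_mul]
        _ = |e * (β + f) - f * (α + e)| := by rw [h6]
        _ ≤ Real.sqrt (e ^ 2 + f ^ 2) * Real.sqrt ((α + e) ^ 2 + (β + f) ^ 2) := hCS
        _ = Real.sqrt (e ^ 2 + f ^ 2) * (|β + f| * Real.sqrt (1 + σh ^ 2)) := by rw [hDh]
    have h8 : (|β| * |σh - σ|) * |β + f|
        ≤ (Real.sqrt (e ^ 2 + f ^ 2) * Real.sqrt (1 + σh ^ 2)) * |β + f| := by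
      calc (|β| * |σh - σ|) * |β + f| = |β| * |β + f| * |σh - σ| := by ring
        _ ≤ Real.sqrt (e ^ 2 + f ^ 2) * (|β + f| * Real.sqrt (1 + σh ^ 2)) := h7
        _ = (Real.sqrt (e ^ 2 + f ^ 2) * Real.sqrt (1 + σh ^ 2)) * |β + f| := by ring
    exact le_of_mul_le_mul_right h8 hβfpos
  -- step 1: chordal bound by √(e²+f²)/√(α²+β²)
  have step1 : chordal σh σ ≤ Real.sqrt (e ^ 2 + f ^ 2) / Real.sqrt (α ^ 2 + β ^ 2) := by
    unfold chordal
    rw [hD, div_le_div_iff₀ (mul_pos hs1 hs2) (mul_pos hβpos hs2)]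
    calc |σh - σ| * (|β| * Real.sqrt (1 + σ ^ 2))
        = (|β| * |σh - σ|) * Real.sqrt (1 + σ ^ 2) := by ring
      _ ≤ (Real.sqrt (e ^ 2 + f ^ 2) * Real.sqrt (1 + σh ^ 2)) * Real.sqrt (1 + σ ^ 2) :=
          mul_le_mul_of_nonneg_right hkey hs2.le
      _ = Real.sqrt (e ^ 2 + f ^ 2) * (Real.sqrt (1 + σh ^ 2) * Real.sqrt (1 + σ ^ 2)) := by ring
  -- step 2: bound √(e²+f²)
  set C : ℝ := ‖y‖ ^ 2 * (1 + ‖s‖ / ‖y‖) with hCdef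
  have hC : C = ‖y‖ * (‖y‖ + ‖s‖) := by
    rw [hCdef]; field_simp
  have hCnn : 0 ≤ C := by rw [hC]; positivity
  have hbnd : ∀ (M : Matrix (Fin N) (Fin N) ℝ),
      |(inner ℝ y (Matrix.toEuclideanLin M (y + s)) : ℝ)| ≤ C * specNorm M := by
    intro M
    calc |(inner ℝ y (Matrix.toEuclideanLin M (y + s)) : ℝ)|
        ≤ ‖y‖ * ‖Matrix.toEuclideanLin M (y + s)‖ := abs_real_inner_le_norm _ _
      _ ≤ ‖y‖ * (specNorm M * ‖y + s‖) := by
          exact mul_le_mul_of_nonneg_left (specNorm_bound M (y + s)) (norm_nonneg y)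
      _ ≤ ‖y‖ * (specNorm M * (‖y‖ + ‖s‖)) := by
          have hna : ‖y + s‖ ≤ ‖y‖ + ‖s‖ := norm_add_le _ _
          have hsn : (0:ℝ) ≤ specNorm M := norm_nonneg _
          have := mul_le_mul_of_nonneg_left hna hsn
          exact mul_le_mul_of_nonneg_left this (norm_nonneg y)
      _ = C * specNorm M := by rw [hC]; ring
  have hE2 : e ^ 2 ≤ C ^ 2 * specNorm Ehat ^ 2 := by
    have := hbnd Ehat
    rw [← hEdef, ← hedef] at this
    nlinarith [mul_self_le_mul_self (abs_nonneg e) this, abs_mul_abs_self e]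
  have hF2 : f ^ 2 ≤ C ^ 2 * specNorm Fhat ^ 2 := by
    have := hbnd Fhat
    rw [← hFdef, ← hfdef] at this
    nlinarith [mul_self_le_mul_self (abs_nonneg f) this, abs_mul_abs_self f]
  have step2 : Real.sqrt (e ^ 2 + f ^ 2)
      ≤ C * Real.sqrt (specNorm Ehat ^ 2 + specNorm Fhat ^ 2) := by
    calc Real.sqrt (e ^ 2 + f ^ 2)
        ≤ Real.sqrt (C ^ 2 * (specNorm Ehat ^ 2 + specNorm Fhat ^ 2)) := by
          apply Real.sqrt_le_sqrt
          have h9 : C ^ 2 * (specNorm Ehat ^ 2 + specNorm Fhat ^ 2)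
              = C ^ 2 * specNorm Ehat ^ 2 + C ^ 2 * specNorm Fhat ^ 2 := by ring
          rw [h9]
          linarith [hE2, hF2]
      _ = C * Real.sqrt (specNorm Ehat ^ 2 + specNorm Fhat ^ 2) := by
          rw [Real.sqrt_mul (sq_nonneg _), Real.sqrt_sq hCnn]
  -- combine
  have hb2 : (0:ℝ) < β ^ 2 := by nlinarith [mul_pos hβpos hβpos, sq_abs β]
  have hDpos : (0:ℝ) < Real.sqrt (α ^ 2 + β ^ 2) := by
    apply Real.sqrt_pos.mpr; nlinarith [sq_nonneg α]
  calc chordal σh σ ≤ Real.sqrt (e ^ 2 + f ^ 2) / Real.sqrt (α ^ 2 + β ^ 2) := step1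
    _ ≤ (C * Real.sqrt (specNorm Ehat ^ 2 + specNorm Fhat ^ 2)) / Real.sqrt (α ^ 2 + β ^ 2) :=
        by gcongr
    _ = C / Real.sqrt (α ^ 2 + β ^ 2) * Real.sqrt (specNorm Ehat ^ 2 + specNorm Fhat ^ 2) := by
        ring
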